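/- Let v₀ ≥ 0 and let g : [0,1] → ℝ be integrable such that φ(s) := v₀ + ∫₀^s g(r) dr is nonnegative on [0,1] and ∫₀¹ (g(s)²/φ(s)) 1_{φ(s)>0} ds < ∞. Then the function ψ := √φ is absolutely continuous: there exists a square-integrable h : [0,1] → ℝ with ψ(s) = √v₀ + ∫₀^s h(r) dr for all s ∈ [0,1], and moreover ∫₀¹ h(s)² ds = (1/4) ∫₀¹ (g(s)²/φ(s)) 1_{φ(s)>0} ds. -/

import Mathlib

open MeasureTheory Filter Topology
open scoped ENNReal

/-- smooth fourth-root approximation of `√|x|` -/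
noncomputable def acSq4 (ε x : ℝ) : ℝ := Real.sqrt (Real.sqrt (x ^ 2 + ε))

/-- its derivative -/
noncomputable def acTh (ε x : ℝ) : ℝ :=
  x / (2 * Real.sqrt (x ^ 2 + ε) * Real.sqrt (Real.sqrt (x ^ 2 + ε)))

lemma acU_pos {ε : ℝ} (hε : 0 < ε) (x : ℝ) : 0 < x ^ 2 + ε := by positivity

lemma acTh_hasDerivAt {ε : ℝ} (hε : 0 < ε) (x : ℝ) :
    HasDerivAt (acSq4 ε) (acTh ε x) x := by
  have hu : 0 < x ^ 2 + ε := acU_pos hε x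
  have hsu : 0 < Real.sqrt (x ^ 2 + ε) := Real.sqrt_pos.2 hu
  have h1 : HasDerivAt (fun y : ℝ => y ^ 2 + ε) (2 * x) x := by
    simpa using ((hasDerivAt_pow 2 x).add_const ε)
  have h2 : HasDerivAt Real.sqrt (1 / (2 * Real.sqrt (x ^ 2 + ε))) (x ^ 2 + ε) :=
    Real.hasDerivAt_sqrt hu.ne'
  have h3 : HasDerivAt Real.sqrt (1 / (2 * Real.sqrt (Real.sqrt (x ^ 2 + ε))))
      (Real.sqrt (x ^ 2 + ε)) := Real.hasDerivAt_sqrt hsu.ne'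
  have := (h3.comp x (h2.comp x h1))
  refine this.congr_deriv ?_
  have hssu : 0 < Real.sqrt (Real.sqrt (x ^ 2 + ε)) := Real.sqrt_pos.2 hsu
  unfold acTh
  field_simp

lemma acTh_continuous {ε : ℝ} (hε : 0 < ε) : Continuous (acTh ε) := by
  apply Continuous.div
  · exact continuous_id
  · fun_prop
  · intro x
    have hu : 0 < x ^ 2 + ε := acU_pos hε x
    have hsu : 0 < Real.sqrt (x ^ 2 + ε) := Real.sqrt_pos.2 hu
    have hssu : 0 < Real.sqrt (Real.sqrt (x ^ 2 + ε)) := Real.sqrt_pos.2 hsu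
    positivity

lemma acTh_bound {ε : ℝ} (hε : 0 < ε) (x : ℝ) :
    |acTh ε x| ≤ 1 / (2 * Real.sqrt (Real.sqrt ε)) := by
  have hu : 0 < x ^ 2 + ε := acU_pos hε x
  have hsu : 0 < Real.sqrt (x ^ 2 + ε) := Real.sqrt_pos.2 hu
  have hssu : 0 < Real.sqrt (Real.sqrt (x ^ 2 + ε)) := Real.sqrt_pos.2 hsu
  have hse : 0 < Real.sqrt (Real.sqrt ε) := Real.sqrt_pos.2 (Real.sqrt_pos.2 hε)
  have hxle : |x| ≤ Real.sqrt (x ^ 2 + ε) := by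
    rw [← Real.sqrt_sq_eq_abs]
    exact Real.sqrt_le_sqrt (by nlinarith)
  have hd : 2 * Real.sqrt (x ^ 2 + ε) * Real.sqrt (Real.sqrt ε)
      ≤ 2 * Real.sqrt (x ^ 2 + ε) * Real.sqrt (Real.sqrt (x ^ 2 + ε)) := by
    have : Real.sqrt (Real.sqrt ε) ≤ Real.sqrt (Real.sqrt (x ^ 2 + ε)) :=
      Real.sqrt_le_sqrt (Real.sqrt_le_sqrt (by nlinarith))
    nlinarith [hsu.le]
  have habs : |acTh ε x| = |x| / (2 * Real.sqrt (x ^ 2 + ε) * Real.sqrt (Real.sqrt (x ^ 2 + ε))) := by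
    unfold acTh
    rw [abs_div, abs_of_pos (show (0:ℝ) < 2 * Real.sqrt (x ^ 2 + ε) * Real.sqrt (Real.sqrt (x ^ 2 + ε)) by positivity)]
  rw [habs]
  calc |x| / (2 * Real.sqrt (x ^ 2 + ε) * Real.sqrt (Real.sqrt (x ^ 2 + ε)))
      ≤ Real.sqrt (x ^ 2 + ε) / (2 * Real.sqrt (x ^ 2 + ε) * Real.sqrt (Real.sqrt ε)) :=
        div_le_div₀ hsu.le hxle (by positivity) hd
    _ = 1 / (2 * Real.sqrt (Real.sqrt ε)) := by
        field_simp

lemma acTh_bound_of_nonneg {ε x : ℝ} (hε : 0 < ε) (hx : 0 ≤ x) :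
    |acTh ε x| ≤ (if 0 < x then (2 * Real.sqrt x)⁻¹ else 0) := by
  rcases eq_or_lt_of_le hx with h0 | hxpos
  · simp [acTh, ← h0]
  · rw [if_pos hxpos]
    have hu : 0 < x ^ 2 + ε := acU_pos hε x
    have hx2 : Real.sqrt (x ^ 2) = x := by
      rw [Real.sqrt_sq hx]
    have h1 : x ≤ Real.sqrt (x ^ 2 + ε) := by
      nth_rewrite 1 [← hx2]; exact Real.sqrt_le_sqrt (by linarith)
    have h2 : Real.sqrt x ≤ Real.sqrt (Real.sqrt (x ^ 2 + ε)) := by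
      apply Real.sqrt_le_sqrt; nth_rewrite 1 [← hx2]
      exact Real.sqrt_le_sqrt (by linarith)
    have hsx : 0 < Real.sqrt x := Real.sqrt_pos.2 hxpos
    have habs : |acTh ε x| = x / (2 * Real.sqrt (x ^ 2 + ε) * Real.sqrt (Real.sqrt (x ^ 2 + ε))) := by
      unfold acTh
      rw [abs_div,
        abs_of_pos (show (0:ℝ) < 2 * Real.sqrt (x ^ 2 + ε) * Real.sqrt (Real.sqrt (x ^ 2 + ε)) by
          have hsu : 0 < Real.sqrt (x ^ 2 + ε) := Real.sqrt_pos.2 hu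
          have hssu : 0 < Real.sqrt (Real.sqrt (x ^ 2 + ε)) := Real.sqrt_pos.2 hsu
          positivity),
        abs_of_pos hxpos]
    rw [habs]
    calc x / (2 * Real.sqrt (x ^ 2 + ε) * Real.sqrt (Real.sqrt (x ^ 2 + ε)))
        ≤ x / (2 * x * Real.sqrt x) := by
          apply div_le_div₀ hx le_rfl (by positivity)
          nlinarith
      _ = (2 * Real.sqrt x)⁻¹ := by
          rw [inv_eq_one_div, div_eq_div_iff (by positivity) (by positivity)]
          ring

lemma seq_eps_pos (m : ℕ) : (0:ℝ) < 1 / (m + 1) := by positivity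

lemma acTh_tendsto {x : ℝ} (hx : 0 < x) :
    Tendsto (fun m : ℕ => acTh (1 / (m + 1)) x) atTop (𝓝 ((2 * Real.sqrt x)⁻¹)) := by
  have hsx : 0 < Real.sqrt x := Real.sqrt_pos.2 hx
  have hx2 : Real.sqrt (x ^ 2) = x := Real.sqrt_sq hx.le
  have hc : ContinuousAt (fun e : ℝ => acTh e x) 0 := by
    apply ContinuousAt.div continuousAt_const
    · fun_prop
    · simp only [add_zero, hx2]
      positivity
  have hval : acTh 0 x = (2 * Real.sqrt x)⁻¹ := by
    unfold acTh
    rw [add_zero, hx2]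
    rw [div_eq_iff (by positivity)]
    field_simp
  have := hc.tendsto.comp tendsto_one_div_add_atTop_nhds_zero_nat
  rw [hval] at this
  exact this

lemma acSq4_tendsto {y : ℝ} (hy : 0 ≤ y) :
    Tendsto (fun m : ℕ => acSq4 (1 / (m + 1)) y) atTop (𝓝 (Real.sqrt y)) := by
  have hc : ContinuousAt (fun e : ℝ => acSq4 e y) 0 := by
    unfold acSq4; fun_prop
  have hval : acSq4 0 y = Real.sqrt y := by
    unfold acSq4
    rw [add_zero, Real.sqrt_sq hy]
  have := hc.tendsto.comp tendsto_one_div_add_atTop_nhds_zero_nat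
  rw [hval] at this
  exact this

lemma acSq4_continuous (ε : ℝ) : Continuous (acSq4 ε) := by
  unfold acSq4; fun_prop

lemma acStep1 {c ε : ℝ} (hε : 0 < ε) {f : ℝ → ℝ} (hf : Continuous f) (hfi : Integrable f)
    (s : ℝ) :
    acSq4 ε (c + ∫ r in (0:ℝ)..s, f r) - acSq4 ε c
      = ∫ r in (0:ℝ)..s, acTh ε (c + ∫ u in (0:ℝ)..r, f u) * f r := by
  set Ψ : ℝ → ℝ := fun t => c + ∫ r in (0:ℝ)..t, f r with hΨ
  have hΨd : ∀ x : ℝ, HasDerivAt Ψ (f x) x := by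
    intro x
    exact (intervalIntegral.integral_hasDerivAt_right hfi.intervalIntegrable
      hf.stronglyMeasurable.stronglyMeasurableAtFilter hf.continuousAt).const_add c
  have hΨc : Continuous Ψ := continuous_const.add (hfi.continuous_primitive 0)
  have key : ∀ x ∈ Set.uIcc (0:ℝ) s,
      HasDerivAt (fun t => acSq4 ε (Ψ t)) (acTh ε (Ψ x) * f x) x := by
    intro x _
    exact (acTh_hasDerivAt hε (Ψ x)).comp x (hΨd x)
  have hcont : Continuous fun r => acTh ε (Ψ r) * f r :=
    ((acTh_continuous hε).comp hΨc).mul hf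
  have hFTC := intervalIntegral.integral_eq_sub_of_hasDerivAt key (hcont.intervalIntegrable 0 s)
  have hΨ0 : Ψ 0 = c := by simp [hΨ]
  rw [hFTC, hΨ0]

lemma acStep2 {c ε : ℝ} (hε : 0 < ε) {G : ℝ → ℝ} (hG : Integrable G) {s : ℝ} (hs : 0 ≤ s) :
    acSq4 ε (c + ∫ r in (0:ℝ)..s, G r) - acSq4 ε c
      = ∫ r in (0:ℝ)..s, acTh ε (c + ∫ u in (0:ℝ)..r, G u) * G r := by
  have hex : ∀ n : ℕ, ∃ q : ℝ → ℝ, HasCompactSupport q ∧ (∫ x, ‖G x - q x‖) ≤ 1/(n+1) ∧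
      Continuous q ∧ Integrable q :=
    fun n => hG.exists_hasCompactSupport_integral_sub_le (seq_eps_pos n)
  choose Gn _ hGnd hGnc hGni using hex
  set Φ : ℝ → ℝ := fun t => c + ∫ r in (0:ℝ)..t, G r with hΦdef
  set Φn : ℕ → ℝ → ℝ := fun n t => c + ∫ r in (0:ℝ)..t, Gn n r with hΦndef
  have hdiff_int : ∀ n, Integrable (fun x => G x - Gn n x) := fun n => hG.sub (hGni n)
  have hΦlim : ∀ t : ℝ, 0 ≤ t → Tendsto (fun n => Φn n t) atTop (𝓝 (Φ t)) := by
    intro t ht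
    have hbound : ∀ n, |Φ t - Φn n t| ≤ 1/(n+1) := by
      intro n
      have h1 : Φ t - Φn n t = ∫ r in (0:ℝ)..t, (G r - Gn n r) := by
        simp only [hΦdef, hΦndef]
        rw [intervalIntegral.integral_sub hG.intervalIntegrable (hGni n).intervalIntegrable]
        ring
      rw [h1]
      calc |∫ r in (0:ℝ)..t, (G r - Gn n r)| ≤ |∫ r in (0:ℝ)..t, ‖G r - Gn n r‖| := by
            rw [← Real.norm_eq_abs (∫ r in (0:ℝ)..t, (G r - Gn n r))]
            exact intervalIntegral.norm_integral_le_abs_integral_norm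
        _ = ∫ r in Set.Ioc 0 t, ‖G r - Gn n r‖ := by
            rw [intervalIntegral.integral_of_le ht, abs_of_nonneg]
            exact setIntegral_nonneg measurableSet_Ioc (fun r _ => norm_nonneg _)
        _ ≤ ∫ x, ‖G x - Gn n x‖ := setIntegral_le_integral (hdiff_int n).norm
            (ae_of_all _ fun r => norm_nonneg _)
        _ ≤ 1/(n+1) := hGnd n
    rw [tendsto_iff_dist_tendsto_zero]
    apply squeeze_zero (fun n => dist_nonneg) (fun n => ?_) tendsto_one_div_add_atTop_nhds_zero_nat
    rw [Real.dist_eq, abs_sub_comm]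
    exact hbound n
  set C : ℝ := 1 / (2 * Real.sqrt (Real.sqrt ε)) with hC
  have hCpos : 0 < C := by
    have : 0 < Real.sqrt (Real.sqrt ε) := Real.sqrt_pos.2 (Real.sqrt_pos.2 hε)
    positivity
  have hΦnc : ∀ n, Continuous (Φn n) :=
    fun n => continuous_const.add ((hGni n).continuous_primitive 0)
  have hΦc : Continuous Φ := continuous_const.add (hG.continuous_primitive 0)
  have hCb : ∀ x, ‖acTh ε x‖ ≤ C := fun x => by
    rw [Real.norm_eq_abs, hC]; exact acTh_bound hε x
  have hintA : ∀ n, Integrable (fun r => acTh ε (Φn n r) * (Gn n r - G r)) := fun n =>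
    ((hGni n).sub hG).bdd_mul ((acTh_continuous hε).comp (hΦnc n)).aestronglyMeasurable
      (ae_of_all _ fun x => hCb (Φn n x))
  have hintB : ∀ n, Integrable (fun r => acTh ε (Φn n r) * G r) := fun n =>
    hG.bdd_mul ((acTh_continuous hε).comp (hΦnc n)).aestronglyMeasurable
      (ae_of_all _ fun x => hCb (Φn n x))
  have hintF : Integrable (fun r => acTh ε (Φ r) * G r) :=
    hG.bdd_mul ((acTh_continuous hε).comp hΦc).aestronglyMeasurable
      (ae_of_all _ fun x => hCb (Φ x))
  have hA : Tendsto (fun n => ∫ r in (0:ℝ)..s, acTh ε (Φn n r) * (Gn n r - G r)) atTop (𝓝 0) := by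
    have hCnlim : Tendsto (fun n : ℕ => C * (1/(n+1))) atTop (𝓝 0) := by
      simpa using tendsto_one_div_add_atTop_nhds_zero_nat.const_mul C
    apply squeeze_zero_norm (fun n => ?_) hCnlim
    calc ‖∫ r in (0:ℝ)..s, acTh ε (Φn n r) * (Gn n r - G r)‖
        ≤ |∫ r in (0:ℝ)..s, ‖acTh ε (Φn n r) * (Gn n r - G r)‖| :=
          intervalIntegral.norm_integral_le_abs_integral_norm
      _ = ∫ r in Set.Ioc 0 s, ‖acTh ε (Φn n r) * (Gn n r - G r)‖ := by
          rw [intervalIntegral.integral_of_le hs, abs_of_nonneg]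
          exact setIntegral_nonneg measurableSet_Ioc (fun r _ => norm_nonneg _)
      _ ≤ ∫ r in Set.Ioc 0 s, C * ‖Gn n r - G r‖ := by
          apply setIntegral_mono_on (hintA n).norm.integrableOn
            (((((hGni n).sub hG)).norm.const_mul C).integrableOn) measurableSet_Ioc
          intro r _
          rw [norm_mul]
          apply mul_le_mul_of_nonneg_right _ (norm_nonneg _)
          exact hCb (Φn n r)
      _ = C * ∫ r in Set.Ioc 0 s, ‖Gn n r - G r‖ := integral_const_mul C _
      _ ≤ C * ∫ x, ‖Gn n x - G x‖ := by
          apply mul_le_mul_of_nonneg_left _ hCpos.le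
          exact setIntegral_le_integral ((hGni n).sub hG).norm (ae_of_all _ fun r => norm_nonneg _)
      _ ≤ C * (1/(n+1)) := by
          apply mul_le_mul_of_nonneg_left _ hCpos.le
          calc (∫ x, ‖Gn n x - G x‖) = ∫ x, ‖G x - Gn n x‖ := by
                congr 1; funext x; exact norm_sub_rev _ _
            _ ≤ 1/(n+1) := hGnd n
  have hB : Tendsto (fun n => ∫ r in (0:ℝ)..s, acTh ε (Φn n r) * G r) atTop
      (𝓝 (∫ r in (0:ℝ)..s, acTh ε (Φ r) * G r)) := by
    simp only [intervalIntegral.integral_of_le hs]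
    apply tendsto_integral_of_dominated_convergence (fun r => C * ‖G r‖)
      (fun n => (hintB n).aestronglyMeasurable.restrict)
      ((hG.norm.const_mul C).integrableOn)
    · intro n
      apply ae_of_all
      intro r
      rw [norm_mul]
      apply mul_le_mul_of_nonneg_right _ (norm_nonneg _)
      exact hCb (Φn n r)
    · rw [ae_restrict_iff' measurableSet_Ioc]
      apply ae_of_all
      intro r hr
      exact (((acTh_continuous hε).continuousAt).tendsto.comp (hΦlim r hr.1.le)).mul_const (G r)
  have hsplit : ∀ n, (∫ r in (0:ℝ)..s, acTh ε (Φn n r) * Gn n r)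
      = (∫ r in (0:ℝ)..s, acTh ε (Φn n r) * (Gn n r - G r))
        + ∫ r in (0:ℝ)..s, acTh ε (Φn n r) * G r := by
    intro n
    rw [← intervalIntegral.integral_add (hintA n).intervalIntegrable
      (hintB n).intervalIntegrable]
    congr 1
    funext r
    ring
  have hRHS : Tendsto (fun n => ∫ r in (0:ℝ)..s, acTh ε (Φn n r) * Gn n r) atTop
      (𝓝 (∫ r in (0:ℝ)..s, acTh ε (Φ r) * G r)) := by
    simp only [hsplit]
    simpa using hA.add hB
  have hLHS : Tendsto (fun n => acSq4 ε (Φn n s) - acSq4 ε c) atTop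
      (𝓝 (acSq4 ε (Φ s) - acSq4 ε c)) :=
    (((acSq4_continuous ε).continuousAt).tendsto.comp (hΦlim s hs)).sub_const _
  have hEq : ∀ n, acSq4 ε (Φn n s) - acSq4 ε c
      = ∫ r in (0:ℝ)..s, acTh ε (Φn n r) * Gn n r :=
    fun n => acStep1 hε (hGnc n) (hGni n) s
  rw [funext hEq] at hLHS
  exact tendsto_nhds_unique hLHS hRHS

/-- weight `1/(2√Φ)` on `{Φ > 0}` -/
noncomputable def acW (Φ : ℝ → ℝ) (r : ℝ) : ℝ :=
  if 0 < Φ r then (2 * Real.sqrt (Φ r))⁻¹ else 0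

lemma acW_nonneg (Φ : ℝ → ℝ) (r : ℝ) : 0 ≤ acW Φ r := by
  unfold acW
  split
  · positivity
  · exact le_rfl

lemma acAlg (gs t P : ℝ) (ht : 0 < t) (h2 : t ^ 2 = P) :
    (gs * (2 * t)⁻¹) ^ 2 = 1 / 4 * (gs ^ 2 / P) := by
  rw [← h2]
  field_simp
  ring_nf

lemma acStep3 {c : ℝ} (hc : 0 ≤ c) {G : ℝ → ℝ} (hG : Integrable G) {s : ℝ} (hs : 0 ≤ s)
    (hpos : ∀ r ∈ Set.Icc 0 s, 0 ≤ c + ∫ u in (0:ℝ)..r, G u)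
    (hhint : IntegrableOn
      (fun r => G r * acW (fun t => c + ∫ u in (0:ℝ)..t, G u) r) (Set.Ioc 0 s)) :
    Real.sqrt (c + ∫ r in (0:ℝ)..s, G r)
      = Real.sqrt c
        + ∫ r in Set.Ioc 0 s, G r * acW (fun t => c + ∫ u in (0:ℝ)..t, G u) r := by
  set Φ : ℝ → ℝ := fun t => c + ∫ u in (0:ℝ)..t, G u with hΦdef
  have hΦc : Continuous Φ := continuous_const.add (hG.continuous_primitive 0)
  have hEm : ∀ m : ℕ, acSq4 (1/(m+1)) (Φ s) - acSq4 (1/(m+1)) c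
      = ∫ r in (0:ℝ)..s, acTh (1/(m+1)) (Φ r) * G r :=
    fun m => acStep2 (seq_eps_pos m) hG hs
  have hLHS : Tendsto (fun m : ℕ => acSq4 (1/(m+1)) (Φ s) - acSq4 (1/(m+1)) c) atTop
      (𝓝 (Real.sqrt (Φ s) - Real.sqrt c)) :=
    (acSq4_tendsto (hpos s ⟨hs, le_rfl⟩)).sub (acSq4_tendsto hc)
  have hRHS : Tendsto (fun m : ℕ => ∫ r in (0:ℝ)..s, acTh (1/(m+1)) (Φ r) * G r) atTop
      (𝓝 (∫ r in Set.Ioc 0 s, G r * acW Φ r)) := by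
    simp only [intervalIntegral.integral_of_le hs]
    apply tendsto_integral_of_dominated_convergence (fun r => ‖G r * acW Φ r‖)
      (fun m => (hG.bdd_mul ((acTh_continuous (seq_eps_pos m)).comp hΦc).aestronglyMeasurable
        (ae_of_all _ fun x => show ‖acTh (1/(m+1)) (Φ x)‖ ≤ 1 / (2 * Real.sqrt (Real.sqrt (1/(m+1)))) by
          rw [Real.norm_eq_abs]; exact acTh_bound (seq_eps_pos m) (Φ x))).aestronglyMeasurable.restrict)
      hhint.norm
    · intro m
      rw [ae_restrict_iff' measurableSet_Ioc]
      apply ae_of_all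
      intro r hr
      have hΦr : 0 ≤ Φ r := hpos r ⟨hr.1.le, hr.2⟩
      rw [norm_mul, norm_mul, Real.norm_eq_abs (acW Φ r), abs_of_nonneg (acW_nonneg Φ r),
        mul_comm ‖G r‖]
      apply mul_le_mul_of_nonneg_right _ (norm_nonneg _)
      rw [Real.norm_eq_abs]
      exact acTh_bound_of_nonneg (seq_eps_pos m) hΦr
    · rw [ae_restrict_iff' measurableSet_Ioc]
      apply ae_of_all
      intro r hr
      simp only [Function.comp_apply]
      have hΦr : 0 ≤ Φ r := hpos r ⟨hr.1.le, hr.2⟩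
      rcases eq_or_lt_of_le hΦr with h0 | hΦpos
      · have hz : ∀ m : ℕ, acTh (1/(m+1)) (Φ r) * G r = 0 := by
          intro m
          rw [← h0]
          simp [acTh]
        rw [funext hz]
        have : G r * acW Φ r = 0 := by
          rw [acW, if_neg (by rw [← h0]; exact lt_irrefl 0)]
          ring
        rw [this]
        exact tendsto_const_nhds
      · have := (acTh_tendsto hΦpos).mul_const (G r)
        have heq : (2 * Real.sqrt (Φ r))⁻¹ * G r = G r * acW Φ r := by
          rw [acW, if_pos hΦpos]; ring
        rw [heq] at this
        exact this
  rw [funext hEm] at hLHS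
  have := tendsto_nhds_unique hLHS hRHS
  have hΦs : Real.sqrt (Φ s) = Real.sqrt (c + ∫ r in (0:ℝ)..s, G r) := rfl
  linarith [this]

/-- Superposition principle: if `φ(s) = v₀ + ∫₀^s g` is nonnegative on `[0,1]` with finite
energy `∫₀¹ g²/φ 1_{φ>0} < ∞`, then `ψ = √φ` is absolutely continuous, with square-integrable
derivative `h`, and `∫₀¹ h² = (1/4) ∫₀¹ g²/φ 1_{φ>0}`. -/
theorem sqrt_of_finite_energy_path_is_AC
    (v₀ : ℝ) (hv₀ : 0 ≤ v₀) (g : ℝ → ℝ) (hg : IntegrableOn g (Set.Icc 0 1))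
    (hφ : ∀ s ∈ Set.Icc (0 : ℝ) 1, 0 ≤ v₀ + ∫ r in (0 : ℝ)..s, g r)
    (hE : (∫⁻ s in Set.Icc (0 : ℝ) 1,
        ENNReal.ofReal
          (if 0 < v₀ + ∫ r in (0 : ℝ)..s, g r
            then g s ^ 2 / (v₀ + ∫ r in (0 : ℝ)..s, g r) else 0)) < ⊤) :
    ∃ h : ℝ → ℝ, MemLp h 2 (volume.restrict (Set.Icc (0 : ℝ) 1)) ∧
      (∀ s ∈ Set.Icc (0 : ℝ) 1,
        Real.sqrt (v₀ + ∫ r in (0 : ℝ)..s, g r)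
          = Real.sqrt v₀ + ∫ r in (0 : ℝ)..s, h r) ∧
      (∫⁻ s in Set.Icc (0 : ℝ) 1, ENNReal.ofReal (h s ^ 2))
        = ENNReal.ofReal (1 / 4) *
          ∫⁻ s in Set.Icc (0 : ℝ) 1,
            ENNReal.ofReal
              (if 0 < v₀ + ∫ r in (0 : ℝ)..s, g r
                then g s ^ 2 / (v₀ + ∫ r in (0 : ℝ)..s, g r) else 0) := by
  classical
  set G : ℝ → ℝ := (Set.Icc (0:ℝ) 1).indicator g with hGdef
  have hGint : Integrable G := (integrable_indicator_iff measurableSet_Icc).2 hg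
  set Φ : ℝ → ℝ := fun t => v₀ + ∫ u in (0:ℝ)..t, G u with hΦdef
  have hint_eq : ∀ s ∈ Set.Icc (0:ℝ) 1,
      (∫ r in (0:ℝ)..s, G r) = ∫ r in (0:ℝ)..s, g r := by
    intro s hs
    rw [intervalIntegral.integral_of_le hs.1, intervalIntegral.integral_of_le hs.1]
    apply setIntegral_congr_fun measurableSet_Ioc
    intro r hr
    have hmem' : r ∈ Set.Icc (0:ℝ) 1 := ⟨hr.1.le, hr.2.trans hs.2⟩
    exact Set.indicator_of_mem hmem' g
  have hΦeq : ∀ s ∈ Set.Icc (0:ℝ) 1, Φ s = v₀ + ∫ r in (0:ℝ)..s, g r := by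
    intro s hs
    simp only [hΦdef]
    rw [hint_eq s hs]
  have hΦpos : ∀ s ∈ Set.Icc (0:ℝ) 1, 0 ≤ Φ s := fun s hs => (hΦeq s hs) ▸ hφ s hs
  have hΦc : Continuous Φ := continuous_const.add (hGint.continuous_primitive 0)
  set h : ℝ → ℝ := fun r => G r * acW Φ r with hhdef
  have hWmeas : Measurable (acW Φ) := by
    apply Measurable.ite (measurableSet_lt measurable_const hΦc.measurable)
    · exact ((hΦc.measurable.sqrt.const_mul 2)).inv
    · exact measurable_const
  have hmeas : AEStronglyMeasurable h (volume.restrict (Set.Icc (0:ℝ) 1)) :=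
    (hGint.aestronglyMeasurable.mul hWmeas.aestronglyMeasurable).restrict
  have hsq : ∀ s ∈ Set.Icc (0:ℝ) 1, ENNReal.ofReal (h s ^ 2)
      = ENNReal.ofReal (1/4) * ENNReal.ofReal
          (if 0 < v₀ + ∫ r in (0:ℝ)..s, g r
            then g s ^ 2 / (v₀ + ∫ r in (0:ℝ)..s, g r) else 0) := by
    intro s hs
    rw [← ENNReal.ofReal_mul (by norm_num)]
    congr 1
    rw [← hΦeq s hs]
    have hGs : G s = g s := Set.indicator_of_mem hs g
    by_cases hp : 0 < Φ s
    · rw [if_pos hp]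
      simp only [hhdef, acW, if_pos hp, hGs]
      exact acAlg (g s) _ _ (Real.sqrt_pos.2 hp) (Real.sq_sqrt hp.le)
    · rw [if_neg hp]
      simp only [hhdef, acW, if_neg hp]
      ring
  have henergy : (∫⁻ s in Set.Icc (0:ℝ) 1, ENNReal.ofReal (h s ^ 2))
      = ENNReal.ofReal (1/4) *
        ∫⁻ s in Set.Icc (0:ℝ) 1, ENNReal.ofReal
          (if 0 < v₀ + ∫ r in (0:ℝ)..s, g r
            then g s ^ 2 / (v₀ + ∫ r in (0:ℝ)..s, g r) else 0) := by
    rw [setLIntegral_congr_fun measurableSet_Icc hsq]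
    exact lintegral_const_mul' _ _ ENNReal.ofReal_ne_top
  have hfin : (∫⁻ s in Set.Icc (0:ℝ) 1, ENNReal.ofReal (h s ^ 2)) < ⊤ := by
    rw [henergy]
    exact ENNReal.mul_lt_top ENNReal.ofReal_lt_top hE
  have hmem : MemLp h 2 (volume.restrict (Set.Icc (0:ℝ) 1)) := by
    rw [memLp_two_iff_integrable_sq hmeas]
    constructor
    · have := hmeas.mul hmeas
      exact hmeas.pow 2
    · rw [hasFiniteIntegral_iff_ofReal (ae_of_all _ fun x => sq_nonneg (h x))]
      exact hfin
  haveI : Fact ((volume : Measure ℝ) (Set.Icc (0:ℝ) 1) < ⊤) := fact_iff.mpr (by simp)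
  have hIccInt : IntegrableOn h (Set.Icc (0:ℝ) 1) := hmem.integrable one_le_two
  refine ⟨h, hmem, ?_, henergy⟩
  intro s hs
  have hpos' : ∀ r ∈ Set.Icc (0:ℝ) s, 0 ≤ v₀ + ∫ u in (0:ℝ)..r, G u :=
    fun r hr => hΦpos r ⟨hr.1, hr.2.trans hs.2⟩
  have hhOn : IntegrableOn (fun r => G r * acW Φ r) (Set.Ioc 0 s) :=
    hIccInt.mono_set ((Set.Ioc_subset_Icc_self).trans (Set.Icc_subset_Icc le_rfl hs.2))
  have hmain := acStep3 hv₀ hGint hs.1 hpos' hhOn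
  rw [← hΦeq s hs] at *
  rw [hmain]
  congr 1
  rw [intervalIntegral.integral_of_le hs.1]
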